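/- arXiv:2405.09388 — 2 statements merged into one kernel-verified Lean document; each statement's English description precedes it below -/
import Mathlib

section
/- Let (𝔘, G, α) be a C*-dynamical system and ω a state such that for some net g^i in G, lim_i (ω(α_{g^i}(A)B) − ω(α_{g^i}A)ω(B)) = 0 for all A, B ∈ 𝔘. Then for every n ≥ 2 and all A_1,...,A_n ∈ 𝔘, the n-th classical cumulant satisfies lim_i c_n(α_{g^i}A_1, A_2, ..., A_n) = 0. -/
open scoped Classical
open Filter Topology

noncomputable section

/-- `π` is a set-partition of the finite set `S ⊆ ℕ`: a collection of nonempty subsets of `S`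
such that every element of `S` lies in exactly one of them. -/
def IsSetPartition (S : Finset ℕ) (π : Finset (Finset ℕ)) : Prop :=
  (∀ V ∈ π, V ⊆ S) ∧ (∀ V ∈ π, V.Nonempty) ∧ ∀ a ∈ S, ∃! V, V ∈ π ∧ a ∈ V

/-- The finset of all set-partitions of `S`. -/
def setPartitions (S : Finset ℕ) : Finset (Finset (Finset ℕ)) :=
  S.powerset.powerset.filter (IsSetPartition S)

/-- A family of blocks is non-crossing if there are no `a < b < c < d` with `a, c` in one
block and `b, d` in a different block. -/
def IsNonCrossing (π : Finset (Finset ℕ)) : Prop :=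
  ¬ ∃ a b c d : ℕ, a < b ∧ b < c ∧ c < d ∧
      ∃ V ∈ π, ∃ W ∈ π, V ≠ W ∧ a ∈ V ∧ c ∈ V ∧ b ∈ W ∧ d ∈ W

/-- The finset of all non-crossing partitions of `S`. -/
def ncPartitions (S : Finset ℕ) : Finset (Finset (Finset ℕ)) :=
  (setPartitions S).filter IsNonCrossing

variable {𝔘 : Type*}

/-- The ordered list `A_{i_1}, …, A_{i_s}` of observables indexed by `V = {i_1 < ⋯ < i_s}`. -/
def blockList (A : ℕ → 𝔘) (V : Finset ℕ) : List 𝔘 :=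
  (V.sort (· ≤ ·)).map A

/-- The ordered product `A_{i_1} ⋯ A_{i_s}` over the block `V = {i_1 < ⋯ < i_s}`. -/
def blockProd [Monoid 𝔘] (A : ℕ → 𝔘) (V : Finset ℕ) : 𝔘 :=
  (blockList A V).prod

/-- The joint classical cumulant of `ω` of the observables `A_i`, `i ∈ S` (order preserved):
`c(S) = ∑_{π ∈ P(S)} (-1)^{|π|-1}(|π|-1)! ∏_{V ∈ π} ω(∏_{i ∈ V} A_i)`. -/
def cumulant [Monoid 𝔘] (ω : 𝔘 → ℂ) (A : ℕ → 𝔘) (S : Finset ℕ) : ℂ :=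
  ∑ π ∈ setPartitions S,
    (-1 : ℂ) ^ (π.card - 1) * ((π.card - 1).factorial : ℂ) * ∏ V ∈ π, ω (blockProd A V)

/-- `κ` (as a function of the ordered list of observables) is the family of free cumulants of
`ω`: it satisfies the moments-to-free-cumulants formula over non-crossing partitions. -/
def IsFreeCumulantFamily [Monoid 𝔘] (ω : 𝔘 → ℂ) (κ : List 𝔘 → ℂ) : Prop :=
  ∀ (A : ℕ → 𝔘) (S : Finset ℕ), S.Nonempty →
    ω (blockProd A S) = ∑ π ∈ ncPartitions S, ∏ V ∈ π, κ (blockList A V)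

/-- A state on a unital C*-algebra: a positive unital linear functional. -/
structure IsState [NormedRing 𝔘] [StarRing 𝔘] [NormedAlgebra ℂ 𝔘] (ω : 𝔘 →ₗ[ℂ] ℂ) : Prop where
  unital : ω 1 = 1
  positive : ∀ a : 𝔘, 0 ≤ (ω (star a * a)).re ∧ (ω (star a * a)).im = 0

/-- `α` is a representation of the group `G` by *-automorphisms. -/
def IsStarAutoRep {G : Type*} [Monoid G] [Ring 𝔘] [Algebra ℂ 𝔘] [StarRing 𝔘]
    (α : G → 𝔘 ≃⋆ₐ[ℂ] 𝔘) : Prop :=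
  ∀ (g h : G) (x : 𝔘), α (g * h) x = α g (α h x)

-- AUX

lemma mem_setPartitions {S : Finset ℕ} {π : Finset (Finset ℕ)} :
    π ∈ setPartitions S ↔ IsSetPartition S π := by
  simp only [setPartitions, Finset.mem_filter, Finset.mem_powerset, and_iff_right_iff_imp]
  intro h V hV
  exact Finset.mem_powerset.2 (h.1 V hV)

lemma block_eq {S : Finset ℕ} {π : Finset (Finset ℕ)} (h : IsSetPartition S π)
    {V W : Finset ℕ} {a : ℕ} (hV : V ∈ π) (haV : a ∈ V) (hW : W ∈ π) (haW : a ∈ W) :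
    V = W := by
  have ha : a ∈ S := h.1 V hV haV
  obtain ⟨U, -, hU⟩ := h.2.2 a ha
  rw [hU V ⟨hV, haV⟩, hU W ⟨hW, haW⟩]

def oneBlock (π : Finset (Finset ℕ)) : Finset ℕ := (π.filter (fun V => 1 ∈ V)).sup id

lemma oneBlock_eq {S : Finset ℕ} {π : Finset (Finset ℕ)} (h : IsSetPartition S π)
    {V : Finset ℕ} (hV : V ∈ π) (h1V : 1 ∈ V) : oneBlock π = V := by
  have hfil : π.filter (fun W => 1 ∈ W) = {V} := by
    ext W
    simp only [Finset.mem_filter, Finset.mem_singleton]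
    exact ⟨fun ⟨hW, h1W⟩ => block_eq h hW h1W hV h1V, fun hw => hw ▸ ⟨hV, h1V⟩⟩
  rw [oneBlock, hfil, Finset.sup_singleton, id]

lemma oneBlock_mem {S : Finset ℕ} {π : Finset (Finset ℕ)} (h : IsSetPartition S π)
    (h1 : 1 ∈ S) : oneBlock π ∈ π ∧ 1 ∈ oneBlock π := by
  obtain ⟨U, ⟨hU, h1U⟩, -⟩ := h.2.2 1 h1
  rw [oneBlock_eq h hU h1U]
  exact ⟨hU, h1U⟩

lemma one_not_mem_block {S : Finset ℕ} {π' : Finset (Finset ℕ)}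
    (hπ : IsSetPartition (S.erase 1) π') {V : Finset ℕ} (hV : V ∈ π') : 1 ∉ V :=
  fun h => (Finset.mem_erase.1 (hπ.1 V hV h)).1 rfl

lemma blockProd_congr [Monoid 𝔘] {A B : ℕ → 𝔘} {V : Finset ℕ} (h : ∀ i ∈ V, A i = B i) :
    blockProd A V = blockProd B V := by
  unfold blockProd blockList
  congr 1
  exact List.map_congr_left fun i hi => h i ((Finset.mem_sort _).1 hi)

lemma blockProd_empty [Monoid 𝔘] (A : ℕ → 𝔘) : blockProd A ∅ = 1 := by
  simp [blockProd, blockList]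

lemma blockProd_min [Monoid 𝔘] (A : ℕ → 𝔘) {V : Finset ℕ} (h1 : 1 ∈ V)
    (hmin : ∀ b ∈ V, 1 ≤ b) : blockProd A V = A 1 * blockProd A (V.erase 1) := by
  conv_lhs => rw [← Finset.insert_erase h1]
  unfold blockProd blockList
  rw [Finset.sort_insert (· ≤ ·) (fun b hb => hmin b (Finset.mem_of_mem_erase hb))
    (Finset.notMem_erase 1 V), List.map_cons, List.prod_cons]

lemma part_insert_singleton {S : Finset ℕ} {π' : Finset (Finset ℕ)} (h1 : 1 ∈ S)
    (hπ : IsSetPartition (S.erase 1) π') : IsSetPartition S (insert {1} π') := by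
  refine ⟨?_, ?_, ?_⟩
  · intro V hV
    rcases Finset.mem_insert.1 hV with rfl | hV
    · exact Finset.singleton_subset_iff.2 h1
    · exact (hπ.1 V hV).trans (Finset.erase_subset _ _)
  · intro V hV
    rcases Finset.mem_insert.1 hV with rfl | hV
    · exact ⟨1, Finset.mem_singleton_self 1⟩
    · exact hπ.2.1 V hV
  · intro a ha
    by_cases ha1 : a = 1
    · subst ha1
      refine ⟨{1}, ⟨Finset.mem_insert_self _ _, Finset.mem_singleton_self 1⟩, ?_⟩
      rintro V ⟨hV, h1V⟩
      rcases Finset.mem_insert.1 hV with rfl | hV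
      · rfl
      · exact absurd h1V (one_not_mem_block hπ hV)
    · obtain ⟨V, ⟨hV, haV⟩, hu⟩ := hπ.2.2 a (Finset.mem_erase.2 ⟨ha1, ha⟩)
      refine ⟨V, ⟨Finset.mem_insert_of_mem hV, haV⟩, ?_⟩
      rintro W ⟨hW, haW⟩
      rcases Finset.mem_insert.1 hW with rfl | hW
      · exact absurd (Finset.mem_singleton.1 haW) ha1
      · exact hu W ⟨hW, haW⟩

lemma part_insert_block {S : Finset ℕ} {π' : Finset (Finset ℕ)} {W : Finset ℕ} (h1 : 1 ∈ S)
    (hπ : IsSetPartition (S.erase 1) π') (hW : W ∈ π') :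
    IsSetPartition S (insert (insert 1 W) (π'.erase W)) := by
  refine ⟨?_, ?_, ?_⟩
  · intro V hV
    rcases Finset.mem_insert.1 hV with rfl | hV
    · exact Finset.insert_subset h1 ((hπ.1 W hW).trans (Finset.erase_subset _ _))
    · exact (hπ.1 V (Finset.mem_of_mem_erase hV)).trans (Finset.erase_subset _ _)
  · intro V hV
    rcases Finset.mem_insert.1 hV with rfl | hV
    · exact ⟨1, Finset.mem_insert_self _ _⟩
    · exact hπ.2.1 V (Finset.mem_of_mem_erase hV)
  · intro a ha
    by_cases ha1 : a = 1
    · subst ha1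
      refine ⟨insert 1 W, ⟨Finset.mem_insert_self _ _, Finset.mem_insert_self _ _⟩, ?_⟩
      rintro V ⟨hV, h1V⟩
      rcases Finset.mem_insert.1 hV with rfl | hV
      · rfl
      · exact absurd h1V (one_not_mem_block hπ (Finset.mem_of_mem_erase hV))
    · obtain ⟨V, ⟨hV, haV⟩, hu⟩ := hπ.2.2 a (Finset.mem_erase.2 ⟨ha1, ha⟩)
      by_cases hVW : V = W
      · subst hVW
        refine ⟨insert 1 V, ⟨Finset.mem_insert_self _ _, Finset.mem_insert_of_mem haV⟩, ?_⟩
        rintro U ⟨hU, haU⟩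
        rcases Finset.mem_insert.1 hU with rfl | hU
        · rfl
        · exact absurd (hu U ⟨Finset.mem_of_mem_erase hU, haU⟩) (Finset.mem_erase.1 hU).1
      · refine ⟨V, ⟨Finset.mem_insert_of_mem (Finset.mem_erase.2 ⟨hVW, hV⟩), haV⟩, ?_⟩
        rintro U ⟨hU, haU⟩
        rcases Finset.mem_insert.1 hU with rfl | hU
        · exact absurd (hu W ⟨hW, (Finset.mem_insert.1 haU).resolve_left ha1⟩).symm hVW
        · exact hu U ⟨Finset.mem_of_mem_erase hU, haU⟩

lemma e_isPartition {S : Finset ℕ} {π : Finset (Finset ℕ)} (h : IsSetPartition S π) :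
    IsSetPartition (S.erase 1) ((π.image (·.erase 1)).erase ∅) := by
  have hmem : ∀ X : Finset ℕ, X ∈ (π.image (·.erase 1)).erase ∅ ↔
      X ≠ ∅ ∧ ∃ V ∈ π, V.erase 1 = X := by
    intro X
    simp [Finset.mem_erase, Finset.mem_image]
  refine ⟨?_, ?_, ?_⟩
  · intro X hX
    obtain ⟨-, V, hV, rfl⟩ := (hmem X).1 hX
    exact Finset.erase_subset_erase 1 (h.1 V hV)
  · intro X hX
    exact Finset.nonempty_iff_ne_empty.2 ((hmem X).1 hX).1
  · intro a ha
    obtain ⟨ha1, haS⟩ := Finset.mem_erase.1 ha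
    obtain ⟨V, ⟨hV, haV⟩, hu⟩ := h.2.2 a haS
    refine ⟨V.erase 1, ⟨(hmem _).2 ⟨Finset.nonempty_iff_ne_empty.1
      ⟨a, Finset.mem_erase.2 ⟨ha1, haV⟩⟩, V, hV, rfl⟩, Finset.mem_erase.2 ⟨ha1, haV⟩⟩, ?_⟩
    rintro X ⟨hX, haX⟩
    obtain ⟨-, U, hU, rfl⟩ := (hmem X).1 hX
    rw [hu U ⟨hU, Finset.mem_of_mem_erase haX⟩]

lemma e_eq {S : Finset ℕ} {π : Finset (Finset ℕ)} (h : IsSetPartition S π)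
    {V1 : Finset ℕ} (hV1 : V1 ∈ π) (h1V1 : 1 ∈ V1) :
    (π.image (·.erase 1)).erase ∅ =
      if V1.erase 1 = ∅ then π.erase V1 else insert (V1.erase 1) (π.erase V1) := by
  have hone : ∀ V ∈ π, V ≠ V1 → 1 ∉ V := fun V hV hne h1V => hne (block_eq h hV h1V hV1 h1V1)
  ext X
  simp only [Finset.mem_erase, Finset.mem_image]
  constructor
  · rintro ⟨hXne, V, hV, rfl⟩
    by_cases hVV1 : V = V1
    · subst hVV1
      rw [if_neg hXne]
      exact Finset.mem_insert_self _ _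
    · rw [Finset.erase_eq_of_notMem (hone V hV hVV1)]
      split
      · exact Finset.mem_erase.2 ⟨hVV1, hV⟩
      · exact Finset.mem_insert_of_mem (Finset.mem_erase.2 ⟨hVV1, hV⟩)
  · intro hX
    split at hX
    case isTrue he =>
      obtain ⟨hne, hXπ⟩ := Finset.mem_erase.1 hX
      exact ⟨Finset.nonempty_iff_ne_empty.1 (h.2.1 X hXπ), X, hXπ,
        Finset.erase_eq_of_notMem (hone X hXπ hne)⟩
    case isFalse he =>
      rcases Finset.mem_insert.1 hX with rfl | hX'
      · exact ⟨he, V1, hV1, rfl⟩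
      · obtain ⟨hne, hXπ⟩ := Finset.mem_erase.1 hX'
        exact ⟨Finset.nonempty_iff_ne_empty.1 (h.2.1 X hXπ), X, hXπ,
          Finset.erase_eq_of_notMem (hone X hXπ hne)⟩

lemma key_identity (f : Finset ℕ → ℂ) (hf : f ∅ = 1) (S : Finset ℕ) (h1 : 1 ∈ S)
    (hS : (S.erase 1).Nonempty) :
    ∑ π ∈ setPartitions S,
      (-1 : ℂ) ^ (π.card - 1) * ((π.card - 1).factorial : ℂ) * ∏ V ∈ π, f (V.erase 1) = 0 := by
  have hsum :
      (∑ p ∈ (setPartitions (S.erase 1)).sigma (fun π' => insert ∅ π'),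
        (if p.2 = (∅ : Finset ℕ) then (-1:ℂ)^p.1.card * (p.1.card.factorial : ℂ)
          else (-1:ℂ)^(p.1.card - 1) * ((p.1.card - 1).factorial : ℂ)) * ∏ V ∈ p.1, f V)
      = ∑ π ∈ setPartitions S,
        (-1 : ℂ) ^ (π.card - 1) * ((π.card - 1).factorial : ℂ) * ∏ V ∈ π, f (V.erase 1) := by
    refine Finset.sum_nbij'
      (fun p => if p.2 = ∅ then insert {1} p.1 else insert (insert 1 p.2) (p.1.erase p.2))
      (fun π => ⟨(π.image (·.erase 1)).erase ∅, (oneBlock π).erase 1⟩)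
      ?_ ?_ ?_ ?_ ?_
    · -- maps into setPartitions S
      rintro ⟨π', W⟩ hp
      obtain ⟨hπ', hW⟩ := Finset.mem_sigma.1 hp
      have hP' := mem_setPartitions.1 hπ'
      by_cases hWe : W = ∅
      · subst hWe
        simpa using mem_setPartitions.2 (part_insert_singleton h1 hP')
      · have hWπ : W ∈ π' := (Finset.mem_insert.1 hW).resolve_left hWe
        simpa [hWe] using mem_setPartitions.2 (part_insert_block h1 hP' hWπ)
    · -- j maps into sigma
      intro π hπ
      have h := mem_setPartitions.1 hπ
      obtain ⟨hV1, h1V1⟩ := oneBlock_mem h h1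
      refine Finset.mem_sigma.2 ⟨mem_setPartitions.2 (e_isPartition h), ?_⟩
      dsimp only
      by_cases he : (oneBlock π).erase 1 = ∅
      · exact Finset.mem_insert.2 (Or.inl he)
      · refine Finset.mem_insert_of_mem ?_
        rw [e_eq h hV1 h1V1, if_neg he]
        exact Finset.mem_insert_self _ _
    · -- left inverse : j (i p) = p
      rintro ⟨π', W⟩ hp
      obtain ⟨hπ', hW⟩ := Finset.mem_sigma.1 hp
      have hP' := mem_setPartitions.1 hπ'
      dsimp only at *
      by_cases hWe : W = ∅
      · subst hWe
        rw [if_pos rfl]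
        have hpart := part_insert_singleton h1 hP'
        have hns : ({1} : Finset ℕ) ∉ π' := fun hc =>
          one_not_mem_block hP' hc (Finset.mem_singleton_self 1)
        have h1' : (((insert {1} π').image (·.erase 1)).erase ∅) = π' := by
          rw [e_eq hpart (Finset.mem_insert_self _ _) (Finset.mem_singleton_self 1),
            if_pos (Finset.erase_singleton 1), Finset.erase_insert hns]
        have h2' : (oneBlock (insert {1} π')).erase 1 = ∅ := by
          rw [oneBlock_eq hpart (Finset.mem_insert_self _ _) (Finset.mem_singleton_self 1)]
          exact Finset.erase_singleton 1
        exact Sigma.ext h1' (heq_of_eq h2')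
      · have hWπ : W ∈ π' := (Finset.mem_insert.1 hW).resolve_left hWe
        have h1W : 1 ∉ W := one_not_mem_block hP' hWπ
        rw [if_neg hWe]
        have hpart := part_insert_block h1 hP' hWπ
        have hnm : insert 1 W ∉ π'.erase W := fun hc =>
          one_not_mem_block hP' (Finset.mem_of_mem_erase hc) (Finset.mem_insert_self _ _)
        have hIW : (insert 1 W).erase 1 = W := Finset.erase_insert h1W
        have hob : oneBlock (insert (insert 1 W) (π'.erase W)) = insert 1 W :=
          oneBlock_eq hpart (Finset.mem_insert_self _ _) (Finset.mem_insert_self 1 W)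
        have h1' : (((insert (insert 1 W) (π'.erase W)).image (·.erase 1)).erase ∅) = π' := by
          rw [e_eq hpart (Finset.mem_insert_self _ _) (Finset.mem_insert_self 1 W), hIW,
            if_neg hWe, Finset.erase_insert hnm, Finset.insert_erase hWπ]
        have h2' : (oneBlock (insert (insert 1 W) (π'.erase W))).erase 1 = W := by
          rw [hob, hIW]
        exact Sigma.ext h1' (heq_of_eq h2')
    · -- right inverse : i (j π) = π
      intro π hπ
      have h := mem_setPartitions.1 hπ
      obtain ⟨hV1, h1V1⟩ := oneBlock_mem h h1
      dsimp only
      by_cases he : (oneBlock π).erase 1 = ∅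
      · have hob : oneBlock π = {1} := by
          rcases (Finset.erase_eq_empty_iff _ _).1 he with hh | hh
          · exact absurd (hh ▸ h1V1) (Finset.notMem_empty 1)
          · exact hh
        rw [if_pos he, e_eq h hV1 h1V1, if_pos he, ← hob, Finset.insert_erase hV1]
      · have hnm : (oneBlock π).erase 1 ∉ π.erase (oneBlock π) := by
          intro hc
          obtain ⟨hne, hcπ⟩ := Finset.mem_erase.1 hc
          obtain ⟨a, ha⟩ := Finset.nonempty_iff_ne_empty.2 he
          exact hne (block_eq h hcπ ha hV1 (Finset.mem_of_mem_erase ha))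
        rw [if_neg he, e_eq h hV1 h1V1, if_neg he, Finset.erase_insert hnm,
          Finset.insert_erase h1V1, Finset.insert_erase hV1]
    · -- values agree
      rintro ⟨π', W⟩ hp
      obtain ⟨hπ', hW⟩ := Finset.mem_sigma.1 hp
      have hP' := mem_setPartitions.1 hπ'
      dsimp only at *
      by_cases hWe : W = ∅
      · subst hWe
        rw [if_pos rfl, if_pos rfl]
        have hns : ({1} : Finset ℕ) ∉ π' := fun hc =>
          one_not_mem_block hP' hc (Finset.mem_singleton_self 1)
        rw [Finset.card_insert_of_notMem hns, Finset.prod_insert hns, Nat.add_sub_cancel,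
          Finset.erase_singleton, hf, one_mul]
        congr 1
        exact Finset.prod_congr rfl fun V hV => by
          rw [Finset.erase_eq_of_notMem (one_not_mem_block hP' hV)]
      · have hWπ : W ∈ π' := (Finset.mem_insert.1 hW).resolve_left hWe
        have h1W : 1 ∉ W := one_not_mem_block hP' hWπ
        have hnm : insert 1 W ∉ π'.erase W := fun hc =>
          one_not_mem_block hP' (Finset.mem_of_mem_erase hc) (Finset.mem_insert_self _ _)
        rw [if_neg hWe, if_neg hWe, Finset.card_insert_of_notMem hnm,
          Finset.prod_insert hnm, Finset.card_erase_of_mem hWπ,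
          Nat.sub_add_cancel (Finset.card_pos.2 ⟨W, hWπ⟩), Finset.erase_insert h1W]
        have hprod : ∏ V ∈ π'.erase W, f (V.erase 1) = ∏ V ∈ π'.erase W, f V :=
          Finset.prod_congr rfl fun V hV => by
            rw [Finset.erase_eq_of_notMem (one_not_mem_block hP' (Finset.mem_of_mem_erase hV))]
        rw [hprod, Finset.mul_prod_erase π' f hWπ]
  rw [← hsum, Finset.sum_sigma]
  refine Finset.sum_eq_zero fun π' hπ' => ?_
  have hP' := mem_setPartitions.1 hπ'
  have hne : (∅ : Finset ℕ) ∉ π' := fun hc =>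
    Finset.nonempty_iff_ne_empty.1 (hP'.2.1 ∅ hc) rfl
  have hpos : 0 < π'.card := by
    obtain ⟨a, ha⟩ := hS
    obtain ⟨V, ⟨hV, -⟩, -⟩ := hP'.2.2 a ha
    exact Finset.card_pos.2 ⟨V, hV⟩
  rw [Finset.sum_insert hne]
  have hcongr : ∀ W ∈ π',
      (if W = (∅ : Finset ℕ) then (-1:ℂ)^π'.card * (π'.card.factorial : ℂ)
        else (-1:ℂ)^(π'.card - 1) * ((π'.card - 1).factorial : ℂ)) * ∏ V ∈ π', f V
      = (-1:ℂ)^(π'.card - 1) * ((π'.card - 1).factorial : ℂ) * ∏ V ∈ π', f V := fun W hW => by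
    rw [if_neg (Finset.nonempty_iff_ne_empty.1 (hP'.2.1 W hW))]
  rw [Finset.sum_congr rfl hcongr, Finset.sum_const, if_pos rfl]
  obtain ⟨m, hm⟩ : ∃ m, π'.card = m + 1 := ⟨π'.card - 1, (Nat.succ_pred_eq_of_pos hpos).symm⟩
  rw [hm, Nat.add_sub_cancel, nsmul_eq_mul, pow_succ, Nat.factorial_succ]
  push_cast
  ring

/-- if the state is G-clustering along the net g^i, then every n-th classical
cumulant with the first argument translated vanishes along the net. -/
theorem classical_cumulant_clustering {G ι : Type*} [Group G] [TopologicalSpace G] [IsTopologicalGroup G]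
    [LocallyCompactSpace G]
    [NormedRing 𝔘] [StarRing 𝔘] [CStarRing 𝔘] [NormedAlgebra ℂ 𝔘] [StarModule ℂ 𝔘]
    [CompleteSpace 𝔘]
    (α : G → 𝔘 ≃⋆ₐ[ℂ] 𝔘) (hα : IsStarAutoRep α)
    (ω : 𝔘 →ₗ[ℂ] ℂ) (hω : IsState ω)
    (l : Filter ι) (g : ι → G)
    (hcl : ∀ A B : 𝔘, Filter.Tendsto
      (fun i => ω (α (g i) A * B) - ω (α (g i) A) * ω B) l (𝓝 0)) :
    ∀ n, 2 ≤ n → ∀ A : ℕ → 𝔘,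
      Filter.Tendsto
        (fun i => cumulant ⇑ω (Function.update A 1 (α (g i) (A 1))) (Finset.Icc 1 n))
        l (𝓝 0) := by
  intro n hn A
  have h1S : (1:ℕ) ∈ Finset.Icc 1 n := Finset.mem_Icc.2 ⟨le_rfl, le_trans one_le_two hn⟩
  have hSne : ((Finset.Icc 1 n).erase 1).Nonempty :=
    ⟨2, Finset.mem_erase.2 ⟨by norm_num, Finset.mem_Icc.2 ⟨one_le_two, hn⟩⟩⟩
  have hkey : ∑ π ∈ setPartitions (Finset.Icc 1 n),
      (-1:ℂ)^(π.card-1) * ((π.card-1).factorial : ℂ) *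
        ∏ V ∈ π, ω (blockProd A (V.erase 1)) = 0 :=
    key_identity (fun V => ω (blockProd A V))
      (by simp [blockProd_empty, hω.unital]) (Finset.Icc 1 n) h1S hSne
  have hpt : ∀ i, cumulant ⇑ω (Function.update A 1 (α (g i) (A 1))) (Finset.Icc 1 n)
      = ∑ π ∈ setPartitions (Finset.Icc 1 n),
          ((-1:ℂ)^(π.card-1) * ((π.card-1).factorial : ℂ) *
            ∏ V ∈ π.erase (oneBlock π), ω (blockProd A V)) *
          (ω (α (g i) (A 1) * blockProd A ((oneBlock π).erase 1))
            - ω (α (g i) (A 1)) * ω (blockProd A ((oneBlock π).erase 1))) := by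
    intro i
    rw [cumulant]
    have hterm : ∀ π ∈ setPartitions (Finset.Icc 1 n),
        (-1:ℂ)^(π.card-1) * ((π.card-1).factorial : ℂ) *
          ∏ V ∈ π, ω (blockProd (Function.update A 1 (α (g i) (A 1))) V)
        = ((-1:ℂ)^(π.card-1) * ((π.card-1).factorial : ℂ) *
            ∏ V ∈ π.erase (oneBlock π), ω (blockProd A V)) *
          (ω (α (g i) (A 1) * blockProd A ((oneBlock π).erase 1))
            - ω (α (g i) (A 1)) * ω (blockProd A ((oneBlock π).erase 1)))
          + ω (α (g i) (A 1)) *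
            ((-1:ℂ)^(π.card-1) * ((π.card-1).factorial : ℂ) *
              ∏ V ∈ π, ω (blockProd A (V.erase 1))) := by
      intro π hπ
      have h := mem_setPartitions.1 hπ
      obtain ⟨hV1, h1V1⟩ := oneBlock_mem h h1S
      have hone : ∀ V ∈ π.erase (oneBlock π), 1 ∉ V := fun V hV h1V =>
        (Finset.mem_erase.1 hV).1 (block_eq h (Finset.mem_of_mem_erase hV) h1V hV1 h1V1)
      have hbp1 : blockProd (Function.update A 1 (α (g i) (A 1))) (oneBlock π)
          = α (g i) (A 1) * blockProd A ((oneBlock π).erase 1) := by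
        rw [blockProd_min _ h1V1 (fun b hb => (Finset.mem_Icc.1 (h.1 _ hV1 hb)).1),
          Function.update_self]
        congr 1
        exact blockProd_congr fun j hj => Function.update_of_ne (Finset.mem_erase.1 hj).1 _ _
      have hupd : ∏ V ∈ π, ω (blockProd (Function.update A 1 (α (g i) (A 1))) V)
          = ω (α (g i) (A 1) * blockProd A ((oneBlock π).erase 1)) *
            ∏ V ∈ π.erase (oneBlock π), ω (blockProd A V) := by
        rw [← Finset.mul_prod_erase π _ hV1, hbp1]
        congr 1
        exact Finset.prod_congr rfl fun V hV =>
          congrArg ω (blockProd_congr fun j hj =>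
            Function.update_of_ne (by rintro rfl; exact hone V hV hj) _ _)
      have herase : ∏ V ∈ π, ω (blockProd A (V.erase 1))
          = ω (blockProd A ((oneBlock π).erase 1)) *
            ∏ V ∈ π.erase (oneBlock π), ω (blockProd A V) := by
        rw [← Finset.mul_prod_erase π (fun V => ω (blockProd A (V.erase 1))) hV1]
        congr 1
        exact Finset.prod_congr rfl fun V hV => by
          rw [Finset.erase_eq_of_notMem (hone V hV)]
      rw [hupd, herase]
      ring
    rw [Finset.sum_congr rfl hterm, Finset.sum_add_distrib, ← Finset.mul_sum, hkey,
      mul_zero, add_zero]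
  have hlim : Tendsto (fun i => ∑ π ∈ setPartitions (Finset.Icc 1 n),
      ((-1:ℂ)^(π.card-1) * ((π.card-1).factorial : ℂ) *
        ∏ V ∈ π.erase (oneBlock π), ω (blockProd A V)) *
      (ω (α (g i) (A 1) * blockProd A ((oneBlock π).erase 1))
        - ω (α (g i) (A 1)) * ω (blockProd A ((oneBlock π).erase 1)))) l (𝓝 0) := by
    have h := tendsto_finset_sum (setPartitions (Finset.Icc 1 n))
      (fun π (_ : π ∈ setPartitions (Finset.Icc 1 n)) =>
        (hcl (A 1) (blockProd A ((oneBlock π).erase 1))).const_mul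
          ((-1:ℂ)^(π.card-1) * ((π.card-1).factorial : ℂ) *
            ∏ V ∈ π.erase (oneBlock π), ω (blockProd A V)))
    simpa using h
  exact hlim.congr fun i => (hpt i).symm
end
end

section
/- Let (𝔘, G, α) be a C*-dynamical system, f: G → ℝ_{>0}, 𝔙 ⊆ 𝔘 a *-subalgebra, and ω a state with lim_i f(g^i)(ω(α_{g^i}(A)B) − ω(α_{g^i}A)ω(B)) = 0 for all A, B ∈ 𝔙 along a net g^i. Then for every n ≥ 2, lim_i f(g^i) κ_n(α_{g^i}A_1, A_2, ..., A_n) = 0 for all A_1,...,A_n ∈ 𝔙, where κ_n is the n-th free cumulant of ω. -/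
open scoped Classical
open Filter Topology

noncomputable section

variable {𝔘 : Type*}

lemma mem_ncPartitions {S : Finset ℕ} {π : Finset (Finset ℕ)} :
    π ∈ ncPartitions S ↔ IsSetPartition S π ∧ IsNonCrossing π := by
  rw [ncPartitions, Finset.mem_filter, mem_setPartitions]

lemma IsNonCrossing.subset {π σ : Finset (Finset ℕ)} (hσ : σ ⊆ π) (h : IsNonCrossing π) :
    IsNonCrossing σ := by
  rintro ⟨a, b, c, d, h1, h2, h3, V, hV, W, hW, hVW, ha, hc, hb, hd⟩
  exact h ⟨a, b, c, d, h1, h2, h3, V, hσ hV, W, hσ hW, hVW, ha, hc, hb, hd⟩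

lemma full_mem_ncPartitions {S : Finset ℕ} (hS : S.Nonempty) : {S} ∈ ncPartitions S := by
  refine mem_ncPartitions.2 ⟨⟨?_, ?_, ?_⟩, ?_⟩
  · intro V hV; rw [Finset.mem_singleton] at hV; subst hV; exact Finset.Subset.refl _
  · intro V hV; rw [Finset.mem_singleton] at hV; subst hV; exact hS
  · intro a ha
    refine ⟨S, ⟨Finset.mem_singleton_self S, ha⟩, ?_⟩
    rintro V ⟨hV, -⟩; exact Finset.mem_singleton.1 hV
  · rintro ⟨a, b, c, d, -, -, -, V, hV, W, hW, hVW, -⟩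
    exact hVW ((Finset.mem_singleton.1 hV).trans (Finset.mem_singleton.1 hW).symm)

lemma eq_full_of_mem_of_eq {S : Finset ℕ} {π : Finset (Finset ℕ)} (hπ : IsSetPartition S π)
    {V : Finset ℕ} (hV : V ∈ π) (hVS : V = S) : π = {S} := by
  subst hVS
  ext W
  rw [Finset.mem_singleton]
  constructor
  · intro hW
    obtain ⟨x, hx⟩ := hπ.2.1 W hW
    obtain ⟨U, -, hU⟩ := hπ.2.2 x (hπ.1 W hW hx)
    exact (hU W ⟨hW, hx⟩).trans (hU V ⟨hV, hπ.1 W hW hx⟩).symm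
  · intro h; subst h; exact hV

lemma ncPartitions_singleton (a : ℕ) : ncPartitions {a} = {{{a}}} := by
  ext π
  rw [Finset.mem_singleton]
  constructor
  · intro h
    obtain ⟨⟨hsub, hne, hcov⟩, -⟩ := mem_ncPartitions.1 h
    obtain ⟨V, ⟨hV, haV⟩, hu⟩ := hcov a (Finset.mem_singleton_self a)
    have hVa : V = {a} :=
      Finset.Subset.antisymm (hsub V hV) (Finset.singleton_subset_iff.2 haV)
    refine Finset.eq_singleton_iff_unique_mem.2 ⟨hVa ▸ hV, ?_⟩
    intro W hW
    obtain ⟨x, hx⟩ := hne W hW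
    have hxa : x = a := Finset.mem_singleton.1 (hsub W hW hx)
    subst hxa
    rw [hu W ⟨hW, hx⟩, hVa]
  · intro h; subst h
    exact full_mem_ncPartitions ⟨a, Finset.mem_singleton_self a⟩

lemma blockList_singleton (A : ℕ → 𝔘) (a : ℕ) : blockList A {a} = [A a] := by
  rw [blockList, Finset.sort_singleton, List.map_cons, List.map_nil]

lemma kappa_singleton [Monoid 𝔘] {ω : 𝔘 → ℂ} {κ : List 𝔘 → ℂ} (hκ : IsFreeCumulantFamily ω κ)
    (x : 𝔘) : κ [x] = ω x := by
  have h := hκ (fun _ => x) {0} ⟨0, Finset.mem_singleton_self 0⟩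
  rw [ncPartitions_singleton, Finset.sum_singleton, Finset.prod_singleton,
    blockList_singleton] at h
  rw [← h, blockProd, blockList_singleton, List.prod_cons, List.prod_nil, mul_one]

lemma blockList_congr {A B : ℕ → 𝔘} {V : Finset ℕ} (h : ∀ j ∈ V, A j = B j) :
    blockList A V = blockList B V :=
  List.map_congr_left fun j hj => h j ((Finset.mem_sort _).1 hj)

lemma sort_Icc (a b : ℕ) : (Finset.Icc a b).sort (· ≤ ·) = List.range' a (b + 1 - a) := by
  apply List.Perm.eq_of_pairwise' (Finset.pairwise_sort _ _) ?_
    (List.perm_of_nodup_nodup_toFinset_eq (Finset.sort_nodup _ _) List.nodup_range' ?_)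
  · exact List.Pairwise.imp le_of_lt List.pairwise_lt_range'
  · ext x
    simp only [List.mem_toFinset, List.mem_range'_1, Finset.mem_sort, Finset.mem_Icc]
    omega

/-- Relabelling a block containing `1` to an initial interval. -/
lemma relabel_block (A : ℕ → 𝔘) (V : Finset ℕ) (h1 : 1 ∈ V) (hpos : ∀ j ∈ V, 1 ≤ j) :
    ∃ B : ℕ → 𝔘, (∀ j, ∃ k, B j = A k) ∧ B 1 = A 1 ∧
      ∀ x : 𝔘, blockList (Function.update A 1 x) V
        = blockList (Function.update B 1 x) (Finset.Icc 1 V.card) := by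
  set l := V.sort (· ≤ ·) with hl
  have hlen : l.length = V.card := Finset.length_sort _
  have hmem : ∀ j, j ∈ l ↔ j ∈ V := fun j => Finset.mem_sort _
  have hsorted : l.Pairwise (· ≤ ·) := Finset.pairwise_sort _ _
  have hnodup : l.Nodup := Finset.sort_nodup _ _
  have hlpos : 0 < l.length := by rw [hlen]; exact Finset.card_pos.2 ⟨1, h1⟩
  have hhead : l[0]'hlpos = 1 := by
    obtain ⟨j, hj⟩ := List.get_of_mem ((hmem 1).2 h1)
    have h01 : l[0]'hlpos ≤ 1 := by
      have := hsorted.rel_get_of_le (a := ⟨0, hlpos⟩) (b := j) (Fin.le_def.2 (Nat.zero_le _))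
      rw [hj] at this
      simpa [List.get_eq_getElem] using this
    have h10 : 1 ≤ l[0]'hlpos := hpos _ ((hmem _).1 (List.getElem_mem _))
    omega
  have hgetD0 : l.getD 0 1 = 1 := by
    rw [List.getD_eq_getElem _ _ hlpos]; exact hhead
  refine ⟨fun k => A (l.getD (k - 1) 1), fun j => ⟨_, rfl⟩,
    by show A (l.getD (1-1) 1) = A 1; rw [show (1:ℕ)-1 = 0 from rfl, hgetD0], ?_⟩
  intro x
  unfold blockList
  rw [sort_Icc, ← hl]
  have hc1 : V.card + 1 - 1 = V.card := by omega
  rw [hc1]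
  apply List.ext_getElem
  · simp [hlen]
  · intro j hj1 hj2
    simp only [List.length_map, hlen] at hj1 hj2
    rw [List.length_range'] at hj2
    simp only [List.getElem_map]
    rw [List.getElem_range'_1]
    have hr : 1 + j = j + 1 := by omega
    rw [hr]
    rcases Nat.eq_zero_or_pos j with hj0 | hjpos
    · subst hj0
      rw [show (0 : ℕ) + 1 = 1 from rfl]
      rw [Function.update_self]
      have : l[(0:ℕ)]'(by omega) = 1 := hhead
      rw [this, Function.update_self]
    · have hne1 : j + 1 ≠ 1 := by omega
      rw [Function.update_of_ne hne1]
      have hgj : l[j]'(by omega) ≠ 1 := by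
        intro h
        have h0 : l[j]'(by omega) = l[0]'hlpos := by rw [h, hhead]
        have := (List.Nodup.getElem_inj_iff hnodup).mp h0
        omega
      rw [Function.update_of_ne hgj]
      rw [show j + 1 - 1 = j from rfl, List.getD_eq_getElem _ _ (by omega : j < l.length)]

lemma sum_singleton_block (n : ℕ) (hn : 2 ≤ n) (F : Finset ℕ → ℂ) :
    ∑ π ∈ ((ncPartitions (Finset.Icc 1 n)).erase {Finset.Icc 1 n}).filter
        (fun π => ({1} : Finset ℕ) ∈ π), ∏ V ∈ π, F V
      = F {1} * ∑ σ ∈ ncPartitions (Finset.Icc 2 n), ∏ V ∈ σ, F V := by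
  rw [Finset.mul_sum]
  refine Finset.sum_nbij' (fun π => π.erase {1}) (fun σ => insert {1} σ) ?_ ?_ ?_ ?_ ?_
  · intro π hπ
    rw [Finset.mem_filter, Finset.mem_erase] at hπ
    obtain ⟨⟨hne, hπ'⟩, h1π⟩ := hπ
    obtain ⟨⟨hsub, hblkne, hcov⟩, hnc⟩ := mem_ncPartitions.1 hπ'
    have hnot1 : ∀ V ∈ π, V ≠ {1} → (1:ℕ) ∉ V := by
      intro V hV hVne h1V
      obtain ⟨U, -, hu⟩ := hcov 1 (Finset.mem_Icc.2 ⟨le_refl 1, by omega⟩)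
      exact hVne ((hu V ⟨hV, h1V⟩).trans (hu {1} ⟨h1π, Finset.mem_singleton_self 1⟩).symm)
    refine mem_ncPartitions.2 ⟨⟨?_, ?_, ?_⟩, hnc.subset (Finset.erase_subset _ _)⟩
    · intro V hV v hv
      obtain ⟨hVne, hVπ⟩ := Finset.mem_erase.1 hV
      have h1 := Finset.mem_Icc.1 (hsub V hVπ hv)
      have hv1 : v ≠ 1 := by rintro rfl; exact hnot1 V hVπ hVne hv
      exact Finset.mem_Icc.2 ⟨by omega, h1.2⟩
    · intro V hV; exact hblkne V (Finset.mem_erase.1 hV).2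
    · intro a ha
      have ha' := Finset.mem_Icc.1 ha
      obtain ⟨V, ⟨hV, haV⟩, hu⟩ := hcov a (Finset.mem_Icc.2 ⟨by omega, ha'.2⟩)
      have hVne : V ≠ {1} := by
        rintro rfl; rw [Finset.mem_singleton] at haV; omega
      exact ⟨V, ⟨Finset.mem_erase.2 ⟨hVne, hV⟩, haV⟩,
        fun W hW => hu W ⟨(Finset.mem_erase.1 hW.1).2, hW.2⟩⟩
  · intro σ hσ
    obtain ⟨⟨hsub, hblkne, hcov⟩, hnc⟩ := mem_ncPartitions.1 hσ
    have h1not : ∀ V ∈ σ, (1:ℕ) ∉ V := fun V hV h1V => by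
      have := Finset.mem_Icc.1 (hsub V hV h1V); omega
    rw [Finset.mem_filter, Finset.mem_erase]
    refine ⟨⟨?_, mem_ncPartitions.2 ⟨⟨?_, ?_, ?_⟩, ?_⟩⟩, Finset.mem_insert_self _ _⟩
    · intro h
      have h1mem : ({1} : Finset ℕ) ∈ ({Finset.Icc 1 n} : Finset (Finset ℕ)) :=
        h ▸ Finset.mem_insert_self _ _
      have h1eq := Finset.mem_singleton.1 h1mem
      have h2 : (2:ℕ) ∈ Finset.Icc 1 n := Finset.mem_Icc.2 ⟨by omega, hn⟩
      rw [← h1eq, Finset.mem_singleton] at h2; omega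
    · intro V hV
      rcases Finset.mem_insert.1 hV with h | h
      · subst h; intro v hv; rw [Finset.mem_singleton] at hv; subst hv
        exact Finset.mem_Icc.2 ⟨le_refl 1, by omega⟩
      · intro v hv
        have := Finset.mem_Icc.1 (hsub V h hv)
        exact Finset.mem_Icc.2 ⟨by omega, this.2⟩
    · intro V hV
      rcases Finset.mem_insert.1 hV with h | h
      · subst h; exact ⟨1, Finset.mem_singleton_self 1⟩
      · exact hblkne V h
    · intro a ha
      have ha' := Finset.mem_Icc.1 ha
      rcases eq_or_ne a 1 with rfl | hane
      · refine ⟨{1}, ⟨Finset.mem_insert_self _ _, Finset.mem_singleton_self 1⟩, ?_⟩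
        rintro W ⟨hW, h1W⟩
        rcases Finset.mem_insert.1 hW with h | h
        · exact h
        · exact absurd h1W (h1not W h)
      · obtain ⟨V, ⟨hV, haV⟩, hu⟩ := hcov a (Finset.mem_Icc.2 ⟨by omega, ha'.2⟩)
        refine ⟨V, ⟨Finset.mem_insert_of_mem hV, haV⟩, ?_⟩
        rintro W ⟨hW, haW⟩
        rcases Finset.mem_insert.1 hW with h | h
        · subst h; rw [Finset.mem_singleton] at haW; exact absurd haW hane
        · exact hu W ⟨h, haW⟩
    · rintro ⟨a, b, c, d, h1, h2, h3, V, hV, W, hW, hVW, haV, hcV, hbW, hdW⟩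
      rcases Finset.mem_insert.1 hV with hV' | hV'
      · subst hV'; rw [Finset.mem_singleton] at haV hcV; omega
      · rcases Finset.mem_insert.1 hW with hW' | hW'
        · subst hW'; rw [Finset.mem_singleton] at hbW hdW; omega
        · exact hnc ⟨a, b, c, d, h1, h2, h3, V, hV', W, hW', hVW, haV, hcV, hbW, hdW⟩
  · intro π hπ
    rw [Finset.mem_filter] at hπ
    exact Finset.insert_erase hπ.2
  · intro σ hσ
    obtain ⟨⟨hsub, -, -⟩, -⟩ := mem_ncPartitions.1 hσ
    apply Finset.erase_insert
    intro h
    have := Finset.mem_Icc.1 (hsub _ h (Finset.mem_singleton_self 1))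
    omega
  · intro π hπ
    rw [Finset.mem_filter] at hπ
    exact (Finset.mul_prod_erase π F hπ.2).symm

/-- if the covariance is f(g)-clustering on a *-subalgebra 𝔙, then all higher
free cumulants of elements of 𝔙 decay at least at the rate 1/f along the net. -/
theorem free_cumulant_rate_of_decay {G ι : Type*} [Group G] [TopologicalSpace G] [IsTopologicalGroup G]
    [LocallyCompactSpace G]
    [NormedRing 𝔘] [StarRing 𝔘] [CStarRing 𝔘] [NormedAlgebra ℂ 𝔘] [StarModule ℂ 𝔘]
    [CompleteSpace 𝔘]
    (α : G → 𝔘 ≃⋆ₐ[ℂ] 𝔘) (hα : IsStarAutoRep α)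
    (ω : 𝔘 →ₗ[ℂ] ℂ) (hω : IsState ω)
    (l : Filter ι) (g : ι → G)
    (κ : List 𝔘 → ℂ) (hκ : IsFreeCumulantFamily ⇑ω κ)
    (𝔙 : StarSubalgebra ℂ 𝔘) (f : G → ℝ) (hf : ∀ x : G, 0 < f x)
    (hcl : ∀ A ∈ 𝔙, ∀ B ∈ 𝔙, Filter.Tendsto
      (fun i => (f (g i) : ℂ) * (ω (α (g i) A * B) - ω (α (g i) A) * ω B)) l (𝓝 0)) :
    ∀ n, 2 ≤ n → ∀ A : ℕ → 𝔘, (∀ j, A j ∈ 𝔙) →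
      Filter.Tendsto
        (fun i => (f (g i) : ℂ) *
          κ (blockList (Function.update A 1 (α (g i) (A 1))) (Finset.Icc 1 n)))
        l (𝓝 0) := by
  intro n
  induction n using Nat.strong_induction_on with
  | _ n IH =>
  intro hn A hA
  set S := Finset.Icc 1 n with hS
  have hSne : S.Nonempty := ⟨1, Finset.mem_Icc.2 ⟨le_refl 1, by omega⟩⟩
  have hfull : ({S} : Finset (Finset ℕ)) ∈ ncPartitions S := full_mem_ncPartitions hSne
  set Q := blockProd A (Finset.Icc 2 n) with hQ
  have hQmem : Q ∈ 𝔙 := by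
    apply list_prod_mem
    intro x hx
    obtain ⟨j, -, rfl⟩ := List.mem_map.1 hx
    exact hA j
  set s₃ := ((ncPartitions S).erase {S}).filter (fun π => ({1} : Finset ℕ) ∉ π) with hs₃
  -- the key algebraic identity
  have key : ∀ x : 𝔘,
      κ (blockList (Function.update A 1 x) S)
        = (ω (x * Q) - ω x * ω Q)
          - ∑ π ∈ s₃, ∏ V ∈ π, κ (blockList (Function.update A 1 x) V) := by
    intro x
    set A' := Function.update A 1 x with hA'
    have hmom := hκ A' S hSne
    have hprod : blockProd A' S = x * Q := by
      have hsort : S.sort (· ≤ ·) = 1 :: List.range' 2 (n - 1) := by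
        rw [hS, sort_Icc]
        rw [show n + 1 - 1 = (n - 1) + 1 from by omega, List.range'_succ]
      rw [blockProd, blockList, hsort, List.map_cons, List.prod_cons]
      congr 1
      · rw [hQ, blockProd, blockList, sort_Icc]
        rw [show n + 1 - 2 = n - 1 from by omega]
        apply congrArg List.prod
        apply List.map_congr_left
        intro j hj
        have hj2 := (List.mem_range'_1.1 hj).1
        exact Function.update_of_ne (by omega) _ _
    rw [hprod, ← Finset.add_sum_erase _ _ hfull, Finset.prod_singleton,
      ← Finset.sum_filter_add_sum_filter_not ((ncPartitions S).erase {S})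
        (fun π => ({1} : Finset ℕ) ∈ π)] at hmom
    rw [hS] at hmom
    rw [sum_singleton_block n hn (fun V => κ (blockList A' V))] at hmom
    have hF1 : κ (blockList A' {1}) = ω x := by
      rw [blockList_singleton, hA', Function.update_self, kappa_singleton hκ]
    have hinner : ∑ σ ∈ ncPartitions (Finset.Icc 2 n), ∏ V ∈ σ, κ (blockList A' V)
        = ω Q := by
      rw [hQ, hκ A (Finset.Icc 2 n) ⟨2, Finset.mem_Icc.2 ⟨le_refl 2, hn⟩⟩]
      apply Finset.sum_congr rfl
      intro σ hσ
      apply Finset.prod_congr rfl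
      intro V hV
      obtain ⟨⟨hsub, -, -⟩, -⟩ := mem_ncPartitions.1 hσ
      congr 1
      apply blockList_congr
      intro j hj
      have := Finset.mem_Icc.1 (hsub V hV hj)
      exact Function.update_of_ne (by omega) _ _
    rw [hF1, hinner] at hmom
    rw [hs₃, hS]
    linear_combination (-1 : ℂ) * hmom
  -- the clustering term
  have hQcl := hcl (A 1) (hA 1) Q hQmem
  -- the sum term
  have hsum : Filter.Tendsto (fun i => ∑ π ∈ s₃,
      ((f (g i) : ℂ) * ∏ V ∈ π, κ (blockList (Function.update A 1 (α (g i) (A 1))) V)))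
      l (𝓝 0) := by
    rw [show (0:ℂ) = ∑ π ∈ s₃, (0:ℂ) from by simp]
    apply tendsto_finset_sum
    intro π hπ
    rw [hs₃, Finset.mem_filter, Finset.mem_erase] at hπ
    obtain ⟨⟨hπne, hπmem⟩, h1π⟩ := hπ
    obtain ⟨⟨hsub, hblkne, hcov⟩, -⟩ := mem_ncPartitions.1 hπmem
    obtain ⟨V₁, ⟨hV₁π, h1V₁⟩, huniq⟩ := hcov 1 (Finset.mem_Icc.2 ⟨le_refl 1, by omega⟩)
    have hother : ∀ V ∈ π.erase V₁, (1:ℕ) ∉ V := by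
      intro V hV h1V
      obtain ⟨hVne, hVπ⟩ := Finset.mem_erase.1 hV
      exact hVne (huniq V ⟨hVπ, h1V⟩)
    have hV₁sub : V₁ ⊆ S := hsub V₁ hV₁π
    have hm2 : 2 ≤ V₁.card := by
      have hne : V₁ ≠ {1} := fun h => h1π (h ▸ hV₁π)
      obtain ⟨b, hb, hbne⟩ := Finset.not_subset.1
        (fun h => hne (Finset.Subset.antisymm h (Finset.singleton_subset_iff.2 h1V₁)))
      rw [Finset.mem_singleton] at hbne
      exact Finset.one_lt_card.2 ⟨1, h1V₁, b, hb, fun h => hbne h.symm⟩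
    have hmn : V₁.card < n := by
      have hle : V₁.card ≤ S.card := Finset.card_le_card hV₁sub
      rw [hS, Nat.card_Icc] at hle
      have hne : V₁.card ≠ n := by
        intro h
        apply hπne
        apply eq_full_of_mem_of_eq ⟨hsub, hblkne, hcov⟩ hV₁π
        apply Finset.eq_of_subset_of_card_le hV₁sub
        rw [hS, Nat.card_Icc]; omega
      omega
    obtain ⟨B, hBk, hB1, hBL⟩ := relabel_block A V₁ h1V₁
      (fun j hj => (Finset.mem_Icc.1 (hV₁sub hj)).1)
    have hBmem : ∀ j, B j ∈ 𝔙 := fun j => by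
      obtain ⟨k, hk⟩ := hBk j; rw [hk]; exact hA k
    have hIH := IH V₁.card hmn hm2 B hBmem
    rw [hB1] at hIH
    have hprodsplit : ∀ x : 𝔘, ∏ V ∈ π, κ (blockList (Function.update A 1 x) V)
        = κ (blockList (Function.update B 1 x) (Finset.Icc 1 V₁.card))
          * ∏ V ∈ π.erase V₁, κ (blockList A V) := by
      intro x
      rw [← Finset.mul_prod_erase π _ hV₁π, hBL x]
      congr 1
      apply Finset.prod_congr rfl
      intro V hV
      congr 1
      apply blockList_congr
      intro j hj
      exact Function.update_of_ne (fun h => hother V hV (by rw [← h]; exact hj)) _ _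
    have hmc := hIH.mul_const (∏ V ∈ π.erase V₁, κ (blockList A V))
    rw [zero_mul] at hmc
    apply hmc.congr
    intro i
    rw [hprodsplit (α (g i) (A 1)), mul_assoc]
  have hdiff := hQcl.sub hsum
  rw [sub_zero] at hdiff
  apply hdiff.congr
  intro i
  rw [key (α (g i) (A 1))]
  simp only [mul_sub, Finset.mul_sum]
end
end
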